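/- arXiv:2007.07874 — 6 statements merged into one kernel-verified Lean document; each statement's English description precedes it below -/
import Mathlib

section
/- For every natural number Δ ≥ 1 and every real σ with 0 < σ ≤ 1, there exists a finite simple graph G with maximum degree exactly Δ such that G is σ-sparse and the chromatic number of G is at least ⌊√(1−σ)·Δ⌋. -/
open Finset

/-- The maximum degree of a finite simple graph (defined using classical decidability). -/
noncomputable def maxDeg {V : Type} [Fintype V] (G : SimpleGraph V) : ℕ := by
  classical exact G.maxDegree

/-- Twice the number of edges of the subgraph of `G` induced by the neighbourhood of `v`
(each edge counted once as an ordered pair in each direction). -/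
noncomputable def nbhdPairs {V : Type} [Fintype V] (G : SimpleGraph V) (v : V) : ℕ := by
  classical exact ((G.neighborFinset v ×ˢ G.neighborFinset v).filter fun p => G.Adj p.1 p.2).card

/-
The witness is a clique on `K = max ⌊√(1-σ)·Δ⌋ 1` vertices, each given enough pendant vertices to
reach degree `Δ`. A pendant vertex lies in no triangle, so a neighbourhood spans at most `(K - 1)²`
ordered adjacent pairs, and `(K - 1)² ≤ (1-σ)·Δ(Δ-1)` because `K - 1 ≤ √(1-σ)·(Δ - 1)`. The clique
forces `K` colours.
-/

open SimpleGraph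

namespace SimpleGraph.Iso

variable {V W : Type} [Fintype V] [Fintype W] {G : SimpleGraph V} {H : SimpleGraph W}

theorem maxDeg_eq (e : G ≃g H) : maxDeg G = maxDeg H := by
  classical
  exact e.maxDegree_eq

theorem nbhdPairs_eq (e : G ≃g H) (v : V) : nbhdPairs H (e v) = nbhdPairs G v := by
  classical
  refine (Finset.card_equiv (e.toEquiv.prodCongr e.toEquiv) fun p => ?_).symm
  simp [mem_neighborFinset, e.map_adj_iff]

end SimpleGraph.Iso

theorem nbhdPairs_le_of_triangles_subset {V : Type} [Fintype V] (G : SimpleGraph V) (S : Finset V)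
    (hS : ∀ a b c, G.Adj a b → G.Adj b c → G.Adj a c → a ∈ S) (v : V) :
    nbhdPairs G v ≤ (#S - 1) ^ 2 := by
  classical
  unfold nbhdPairs
  by_cases hv : v ∈ S
  · calc _ ≤ #((S.erase v) ×ˢ (S.erase v)) := by
          refine card_le_card fun p hp => ?_
          simp only [mem_filter, mem_product, mem_neighborFinset] at hp
          obtain ⟨⟨h1, h2⟩, h12⟩ := hp
          simp only [mem_product, mem_erase]
          exact ⟨⟨h1.ne', hS _ _ _ h12 h2.symm h1.symm⟩,
            ⟨h2.ne', hS _ _ _ h12.symm h1.symm h2.symm⟩⟩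
      _ = (#S - 1) ^ 2 := by rw [card_product, card_erase_of_mem hv, sq]
  · rw [card_eq_zero.mpr (filter_eq_empty_iff.mpr fun p hp h12 => ?_)]
    · exact Nat.zero_le _
    simp only [mem_product, mem_neighborFinset] at hp
    exact hv (hS _ _ _ hp.1 h12 hp.2)

/-- The vertex `(i, 0)` is the `i`-th vertex of a clique on `K` vertices, and the vertices `(i, j)`
with `j ≠ 0` are the `p` pendant vertices attached to it. -/
def cliqueWithPendants (K p : ℕ) : SimpleGraph (Fin K × Fin (p + 1)) where
  Adj a b := a ≠ b ∧ (a.2 = 0 ∧ b.2 = 0 ∨ a.1 = b.1 ∧ (a.2 = 0 ∨ b.2 = 0))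
  symm := ⟨fun _ _ h => ⟨h.1.symm, by grind⟩⟩
  loopless := ⟨fun _ h => h.1 rfl⟩

namespace cliqueWithPendants

variable {K p : ℕ}

@[simp]
theorem adj {a b : Fin K × Fin (p + 1)} :
    (cliqueWithPendants K p).Adj a b ↔
      a ≠ b ∧ (a.2 = 0 ∧ b.2 = 0 ∨ a.1 = b.1 ∧ (a.2 = 0 ∨ b.2 = 0)) :=
  Iff.rfl

theorem eq_of_adj_of_snd_ne_zero {a b : Fin K × Fin (p + 1)} (ha : a.2 ≠ 0)
    (hab : (cliqueWithPendants K p).Adj a b) : b = (a.1, 0) := by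
  obtain ⟨-, h⟩ := hab
  ext <;> grind

theorem snd_eq_zero_of_triangle {a b c : Fin K × Fin (p + 1)}
    (hab : (cliqueWithPendants K p).Adj a b) (hbc : (cliqueWithPendants K p).Adj b c)
    (hac : (cliqueWithPendants K p).Adj a c) : a.2 = 0 := by
  by_contra ha
  rw [eq_of_adj_of_snd_ne_zero ha hab, eq_of_adj_of_snd_ne_zero ha hac] at hbc
  exact hbc.ne rfl

theorem nbhdPairs_le (v : Fin K × Fin (p + 1)) :
    nbhdPairs (cliqueWithPendants K p) v ≤ (K - 1) ^ 2 := by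
  simpa using nbhdPairs_le_of_triangles_subset _ (univ ×ˢ {0}) (fun a b c hab hbc hac => by
    simpa only [mem_product, mem_univ, mem_singleton, true_and] using
      snd_eq_zero_of_triangle hab hbc hac) v

theorem isClique :
    (cliqueWithPendants K p).IsClique ((univ ×ˢ {0} : Finset (Fin K × Fin (p + 1))) : Set _) := by
  intro a ha b hb hab
  simp only [coe_product, coe_univ, coe_singleton, Set.mem_prod, Set.mem_univ,
    Set.mem_singleton_iff, true_and] at ha hb
  exact ⟨hab, Or.inl ⟨ha, hb⟩⟩

theorem le_chromaticNumber : (K : ℕ∞) ≤ (cliqueWithPendants K p).chromaticNumber := by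
  simpa using (isClique (p := p)).card_le_chromaticNumber

theorem degree_of_snd_ne_zero [DecidableRel (cliqueWithPendants K p).Adj]
    {v : Fin K × Fin (p + 1)} (hv : v.2 ≠ 0) : (cliqueWithPendants K p).degree v = 1 := by
  rw [← card_neighborFinset_eq_degree, card_eq_one]
  refine ⟨(v.1, 0), ?_⟩
  ext b
  rw [mem_neighborFinset, mem_singleton]
  refine ⟨eq_of_adj_of_snd_ne_zero hv, ?_⟩
  rintro rfl
  exact ⟨fun h => hv (congrArg Prod.snd h), by simp⟩

theorem degree_of_snd_eq_zero [DecidableRel (cliqueWithPendants K p).Adj] (i : Fin K) :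
    (cliqueWithPendants K p).degree (i, 0) = K - 1 + p := by
  classical
  have : (cliqueWithPendants K p).neighborFinset (i, 0) =
      (univ ×ˢ {0}).erase (i, 0) ∪ {i} ×ˢ univ.erase 0 := by
    ext b
    simp only [mem_neighborFinset, adj, mem_union, mem_erase, mem_product, mem_univ,
      mem_singleton]
    grind
  have hdisj : Disjoint ((univ ×ˢ {0}).erase (i, 0)) ({i} ×ˢ univ.erase (0 : Fin (p + 1))) :=
    disjoint_left.mpr fun b h1 h2 => by simp only [mem_erase, mem_product] at h1 h2; grind
  rw [← card_neighborFinset_eq_degree, this, card_union_of_disjoint hdisj, card_erase_of_mem,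
    card_product, card_product, card_erase_of_mem] <;> simp

theorem maxDeg_eq (hK : 0 < K) : maxDeg (cliqueWithPendants K p) = K - 1 + p := by
  classical
  unfold maxDeg
  refine le_antisymm (maxDegree_le_of_forall_degree_le _ _ fun v => ?_) ?_
  · by_cases hv : v.2 = 0
    · rw [show v = (v.1, 0) from Prod.ext rfl hv, degree_of_snd_eq_zero]
    · rw [degree_of_snd_ne_zero hv]
      have := v.2.isLt
      have : (v.2 : ℕ) ≠ 0 := fun h => hv (Fin.ext h)
      omega
  · exact (degree_of_snd_eq_zero ⟨0, hK⟩).symm.le.trans (degree_le_maxDegree _ _)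

end cliqueWithPendants

theorem floor_mul_le_of_le_one {s : ℝ} (hs : s ≤ 1) (n : ℕ) : ⌊s * n⌋₊ ≤ n :=
  Nat.floor_le_of_le (mul_le_of_le_one_left n.cast_nonneg hs)

theorem sq_floor_mul_sub_one_le {s : ℝ} (hs0 : 0 ≤ s) (hs1 : s ≤ 1) (n : ℕ) :
    (((⌊s * n⌋₊ - 1) ^ 2 : ℕ) : ℝ) ≤ s ^ 2 * (2 * n.choose 2) := by
  set k := ⌊s * n⌋₊
  rcases Nat.eq_zero_or_pos k with hk | hk
  · rw [hk]
    simp only [zero_tsub, ne_eq, OfNat.ofNat_ne_zero, not_false_eq_true, zero_pow, Nat.cast_zero]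
    positivity
  · have hkn : (k : ℝ) ≤ s * n := Nat.floor_le (by positivity)
    have hk1 : (1 : ℝ) ≤ k := by exact_mod_cast hk
    have hn1 : (1 : ℝ) ≤ n := by exact_mod_cast hk.trans_le (floor_mul_le_of_le_one hs1 n)
    have hks : (k : ℝ) - 1 ≤ s * (n - 1) := by linarith
    calc (((k - 1) ^ 2 : ℕ) : ℝ) = ((k : ℝ) - 1) ^ 2 := by push_cast [Nat.cast_sub hk]; rfl
      _ ≤ (s * (n - 1)) ^ 2 := pow_le_pow_left₀ (by linarith) hks 2
      _ ≤ s ^ 2 * (2 * n.choose 2) := by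
        rw [Nat.cast_choose_two]
        nlinarith [sq_nonneg s]

/-- For every natural number Δ ≥ 1 and every real σ with 0 < σ ≤ 1, there exists a
finite simple graph G with maximum degree exactly Δ such that G is σ-sparse and the chromatic
number of G is at least ⌊√(1−σ)·Δ⌋. -/
theorem stmt1 (Δ : ℕ) (hΔ : 1 ≤ Δ) (σ : ℝ) (hσ0 : 0 < σ) (hσ1 : σ ≤ 1) :
    ∃ (m : ℕ) (G : SimpleGraph (Fin m)),
      maxDeg G = Δ ∧
      (∀ v, (nbhdPairs G v : ℝ) ≤ 2 * ((1 - σ) * (Δ.choose 2))) ∧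
      (⌊Real.sqrt (1 - σ) * (Δ : ℝ)⌋₊ : ℕ∞) ≤ G.chromaticNumber := by
  set s := √(1 - σ)
  have hs1 : s ≤ 1 := Real.sqrt_le_one.mpr (by linarith)
  set k := ⌊s * Δ⌋₊
  set K := max k 1
  have hKΔ : K ≤ Δ := max_le (floor_mul_le_of_le_one hs1 Δ) hΔ
  set G := cliqueWithPendants K (Δ + 1 - K)
  have hcard : Fintype.card (Fin K × Fin (Δ + 1 - K + 1)) = K * (Δ + 1 - K + 1) := by simp
  set e := G.overFinIso hcard
  refine ⟨_, G.overFin hcard, ?_, fun v => ?_, ?_⟩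
  · rw [← e.maxDeg_eq, cliqueWithPendants.maxDeg_eq (by omega)]
    omega
  · obtain ⟨v, rfl⟩ := e.surjective v
    have hsq : s ^ 2 = 1 - σ := Real.sq_sqrt (by linarith)
    calc (nbhdPairs (G.overFin hcard) (e v) : ℝ) ≤ ((k - 1) ^ 2 : ℕ) := by
          rw [e.nbhdPairs_eq]
          exact_mod_cast (cliqueWithPendants.nbhdPairs_le v).trans
            (Nat.pow_le_pow_left (by omega) 2)
      _ ≤ s ^ 2 * (2 * Δ.choose 2) := sq_floor_mul_sub_one_le (Real.sqrt_nonneg _) hs1 Δ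
      _ = 2 * ((1 - σ) * Δ.choose 2) := by rw [hsq]; ring
  · rw [← chromaticNumber_congr e]
    exact (Nat.cast_le.mpr (le_max_left k 1)).trans cliqueWithPendants.le_chromaticNumber
end

section
/- Let G be a Δ-regular finite simple graph with Δ ≥ 1, let 0 < γ ≤ Δ, and run the random independent set procedure on G with parameter γ, producing the random independent set I. Then for every vertex v of G, P[v ∈ I] = (1/Δ)·∫₀^γ (1 − x/Δ)^Δ dx. -/
open MeasureTheory Finset
open scoped ENNReal

/-- The uniform probability measure on the interval [0,1]. -/
noncomputable def uniform01 : Measure ℝ := volume.restrict (Set.Icc 0 1)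

instance : IsProbabilityMeasure uniform01 :=
  ⟨by simp [uniform01, Real.volume_Icc]⟩

/-- The law of the random data attached to a single vertex: a Bernoulli(p) activation bit
together with an independent uniform priority in [0,1]. -/
noncomputable def coordMeasure (p : ℝ≥0∞) : Measure (Bool × ℝ) :=
  ((PMF.bernoulli (min p 1).toNNReal
    (by simpa using ENNReal.toNNReal_mono ENNReal.one_ne_top (min_le_right p 1))).toMeasure).prod uniform01

instance (p : ℝ≥0∞) : IsProbabilityMeasure (coordMeasure p) := by
  unfold coordMeasure; infer_instance

/-- The underlying probability space of the random independent set procedure: the product over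
all vertices of (Bernoulli(p) × Uniform[0,1]). -/
noncomputable def procMeasure (V : Type) [Fintype V] (p : ℝ≥0∞) : Measure (V → Bool × ℝ) :=
  Measure.pi fun _ => coordMeasure p

/-- The random independent set produced by the procedure: the set of activated vertices whose
priority exceeds that of every activated neighbour. -/
noncomputable def indepSet {V : Type} [Fintype V] [DecidableEq V] (G : SimpleGraph V) [DecidableRel G.Adj]
    (ω : V → Bool × ℝ) : Finset V :=
  Finset.univ.filter fun v => (ω v).1 = true ∧
    ∀ u ∈ G.neighborFinset v, (ω u).1 = true → (ω u).2 < (ω v).2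

/-!
Condition on the data `(a, t)` of `v`: `v ∈ I` iff `v` is active and each of its `Δ` neighbours
is inactive or has priority below `t`. Given `t` these `Δ` events are independent, each of
probability `1 - p (1 - t)` where `p = γ / Δ`, so `P[v ∈ I] = p ∫₀¹ (1 - p (1 - t))^Δ dt`, and the
substitution `x = γ (1 - t)` turns this into the stated integral.
-/

section ProductSplit

variable {ι α : Type*} [Fintype ι] [DecidableEq ι] [MeasurableSpace α] (μ : ι → Measure α)

theorem measurePreserving_eval_prod_restrict_ne [∀ i, SigmaFinite (μ i)] (v : ι) :
    MeasurePreserving (fun ω : ι → α => (ω v, fun u : {u // u ≠ v} => ω u))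
      (Measure.pi μ) ((μ v).prod (Measure.pi fun u : {u // u ≠ v} => μ u)) := by
  refine MeasurePreserving.comp (g := Prod.map (MeasurableEquiv.piUnique _) id) ?_
    (measurePreserving_piEquivPiSubtypeProd μ (· = v))
  convert (measurePreserving_piUnique fun u : {u // u = v} => μ u).prod
    (MeasurePreserving.id (Measure.pi fun u : {u // u ≠ v} => μ u)) using 3
  exact rfl

theorem measure_pi_setOf_mem_and_forall_mem [∀ i, IsProbabilityMeasure (μ i)] {v : ι}
    {s : Finset ι} (hv : v ∉ s) {A : Set α} {R : Set (α × α)} (hA : MeasurableSet A)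
    (hR : MeasurableSet R) :
    Measure.pi μ {ω | ω v ∈ A ∧ ∀ u ∈ s, (ω u, ω v) ∈ R} =
      ∫⁻ x in A, ∏ u ∈ s, μ u {y | (y, x) ∈ R} ∂μ v := by
  set E : Set (α × ({u // u ≠ v} → α)) :=
    {z | z.1 ∈ A ∧ ∀ u : {u // u ≠ v}, u.1 ∈ s → (z.2 u, z.1) ∈ R}
  have hE : MeasurableSet E :=
    measurableSet_setOfPred.mpr ((hA.mem.comp measurable_fst).and (Measurable.forall fun u =>
      measurable_const.imp (hR.mem.comp (by fun_prop))))
  have hpre : {ω | ω v ∈ A ∧ ∀ u ∈ s, (ω u, ω v) ∈ R} =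
      (fun ω : ι → α => (ω v, fun u : {u // u ≠ v} => ω u)) ⁻¹' E := by
    ext ω
    simp only [E, Set.mem_ofPred_eq, Set.mem_preimage, Subtype.forall]
    exact and_congr_right fun _ => forall_congr' fun u =>
      ⟨fun h _ hu => h hu, fun h hu => h (ne_of_mem_of_not_mem hu hv) hu⟩
  rw [hpre, (measurePreserving_eval_prod_restrict_ne μ v).measure_preimage hE.nullMeasurableSet,
    Measure.prod_apply hE, ← lintegral_indicator hA]
  refine lintegral_congr fun x => ?_
  by_cases hx : x ∈ A
  · have hslice : Prod.mk x ⁻¹' E =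
        Set.univ.pi fun u : {u // u ≠ v} => if u.1 ∈ s then {y | (y, x) ∈ R} else Set.univ := by
      ext ρ; simp [E, hx]
    rw [Set.indicator_of_mem hx, hslice, Measure.pi_pi]
    simp only [apply_ite (μ _), measure_univ]
    rw [← Finset.prod_subtype (univ.erase v) (by simp)
      (fun u => if u ∈ s then μ u {y | (y, x) ∈ R} else 1), Finset.prod_ite_mem,
      inter_eq_right.mpr fun u hu => mem_erase.mpr ⟨ne_of_mem_of_not_mem hu hv, mem_univ u⟩]
  · have hslice : Prod.mk x ⁻¹' E = ∅ := by
      ext ρ; simp [E, hx]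
    rw [Set.indicator_of_notMem hx, hslice, measure_empty]

end ProductSplit

theorem setLIntegral_prod_univ_right {α β : Type*} [MeasurableSpace α] [MeasurableSpace β]
    (μ : Measure α) (ν : Measure β) [SFinite μ] [SFinite ν] (s : Set α) {f : β → ℝ≥0∞}
    (hf : Measurable f) :
    ∫⁻ z in s ×ˢ Set.univ, f z.2 ∂μ.prod ν = μ s * ∫⁻ y, f y ∂ν := by
  rw [setLIntegral_prod (fun z => f z.2) (hf.comp measurable_snd).aemeasurable]
  simp only [Measure.restrict_univ]
  rw [setLIntegral_const, mul_comm]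

theorem smul_intervalIntegral_comp_mul_one_sub {E : Type*} [NormedAddCommGroup E]
    [NormedSpace ℝ E] (f : ℝ → E) (c : ℝ) :
    c • ∫ t in (0:ℝ)..1, f (c * (1 - t)) = ∫ x in (0:ℝ)..c, f x := by
  rcases eq_or_ne c 0 with rfl | hc
  · simp
  rw [intervalIntegral.integral_comp_sub_left (fun t => f (c * t)),
    intervalIntegral.integral_comp_mul_left f hc, smul_inv_smul₀ hc]
  simp

theorem uniform01_Iio {t : ℝ} (ht : t ∈ Set.Icc (0:ℝ) 1) :
    uniform01 (Set.Iio t) = ENNReal.ofReal t := by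
  have : Set.Iio t ∩ Set.Icc 0 1 = Set.Ico 0 t := by
    ext x; grind
  rw [uniform01, Measure.restrict_apply measurableSet_Iio, this, Real.volume_Ico, sub_zero]

theorem measurable_measure_setOf_imp_lt (μ : Measure (Bool × ℝ)) :
    Measurable fun t : ℝ => μ {y | y.1 = true → y.2 < t} :=
  Monotone.measurable fun _ _ hst => measure_mono fun _ hy hb => (hy hb).trans_le hst

section Coordinate

variable {p : ℝ} (hp0 : 0 ≤ p) (hp1 : p ≤ 1)
include hp0 hp1

theorem coordMeasure_singleton_prod (b : Bool) (S : Set ℝ) :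
    coordMeasure (ENNReal.ofReal p) ({b} ×ˢ S) =
      ENNReal.ofReal (cond b p (1 - p)) * uniform01 S := by
  have hmin : min (ENNReal.ofReal p) 1 = ENNReal.ofReal p :=
    min_eq_left (ENNReal.ofReal_le_one.mpr hp1)
  rw [coordMeasure, Measure.prod_prod,
    PMF.toMeasure_apply_singleton _ _ (measurableSet_singleton b)]
  -- the Bernoulli mass function at `b` unfolds to `cond b q (1 - q)`
  cases b
  · change (1 - ((min (ENNReal.ofReal p) 1).toNNReal : ℝ≥0∞)) * uniform01 S = _
    rw [hmin, ENNReal.coe_toNNReal ENNReal.ofReal_ne_top, ← ENNReal.ofReal_one,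
      ← ENNReal.ofReal_sub _ hp0]
    rfl
  · change ((min (ENNReal.ofReal p) 1).toNNReal : ℝ≥0∞) * uniform01 S = _
    rw [hmin, ENNReal.coe_toNNReal ENNReal.ofReal_ne_top]
    rfl

theorem coordMeasure_setOf_imp_lt {t : ℝ} (ht : t ∈ Set.Icc (0:ℝ) 1) :
    coordMeasure (ENNReal.ofReal p) {y | y.1 = true → y.2 < t} =
      ENNReal.ofReal (1 - p * (1 - t)) := by
  have hsplit : {y : Bool × ℝ | y.1 = true → y.2 < t} =
      {false} ×ˢ Set.univ ∪ {true} ×ˢ Set.Iio t := by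
    ext ⟨b, r⟩; cases b <;> simp
  have hdisj : Disjoint ({false} ×ˢ Set.univ : Set (Bool × ℝ)) ({true} ×ˢ Set.Iio t) :=
    Set.disjoint_prod.mpr (Or.inl (by simp))
  rw [hsplit, measure_union hdisj ((measurableSet_singleton true).prod measurableSet_Iio),
    coordMeasure_singleton_prod hp0 hp1, coordMeasure_singleton_prod hp0 hp1, measure_univ,
    uniform01_Iio ht, mul_one, cond_false, cond_true, ← ENNReal.ofReal_mul hp0,
    ← ENNReal.ofReal_add (by linarith) (mul_nonneg hp0 ht.1)]
  congr 1
  ring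

theorem toReal_lintegral_coordMeasure_setOf_imp_lt_pow (n : ℕ) :
    (∫⁻ t, coordMeasure (ENNReal.ofReal p) {y | y.1 = true → y.2 < t} ^ n ∂uniform01).toReal =
      ∫ t in (0:ℝ)..1, (1 - p * (1 - t)) ^ n := by
  rw [← integral_toReal ((measurable_measure_setOf_imp_lt _).pow_const n).aemeasurable
      (ae_of_all _ fun t => ENNReal.pow_lt_top (measure_lt_top _ _)),
    intervalIntegral.integral_of_le zero_le_one, ← integral_Icc_eq_integral_Ioc, uniform01]
  refine setIntegral_congr_fun measurableSet_Icc fun t ht => ?_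
  have hnonneg : 0 ≤ 1 - p * (1 - t) := by nlinarith [ht.1, ht.2]
  simp only [ENNReal.toReal_pow, coordMeasure_setOf_imp_lt hp0 hp1 ht,
    ENNReal.toReal_ofReal hnonneg]

end Coordinate

theorem procMeasure_mem_indepSet {V : Type} [Fintype V] [DecidableEq V] (G : SimpleGraph V)
    [DecidableRel G.Adj] {Δ : ℕ} (hreg : G.IsRegularOfDegree Δ) {p : ℝ} (hp0 : 0 ≤ p)
    (hp1 : p ≤ 1) (v : V) :
    procMeasure V (ENNReal.ofReal p) {ω | v ∈ indepSet G ω} =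
      ENNReal.ofReal p *
        ∫⁻ t, coordMeasure (ENNReal.ofReal p) {y | y.1 = true → y.2 < t} ^ Δ ∂uniform01 := by
  have hevent : {ω | v ∈ indepSet G ω} = {ω : V → Bool × ℝ | ω v ∈ {true} ×ˢ Set.univ ∧
      ∀ u ∈ G.neighborFinset v, (ω u, ω v) ∈ {z : (Bool × ℝ) × (Bool × ℝ) |
        z.1.1 = true → z.1.2 < z.2.2}} := by
    ext ω; simp [indepSet]
  have hR : MeasurableSet {z : (Bool × ℝ) × (Bool × ℝ) | z.1.1 = true → z.1.2 < z.2.2} :=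
    (measurable_fst.fst (measurableSet_singleton true)).imp
      (measurableSet_lt measurable_fst.snd measurable_snd.snd)
  have hactive := coordMeasure_singleton_prod hp0 hp1 true Set.univ
  simp only [coordMeasure, Measure.prod_prod, measure_univ, mul_one, cond_true] at hactive
  rw [hevent, procMeasure, measure_pi_setOf_mem_and_forall_mem _ (G.notMem_neighborFinset_self v)
      ((measurableSet_singleton true).prod MeasurableSet.univ) hR]
  simp only [Set.mem_ofPred_eq, prod_const, G.card_neighborFinset_eq_degree, hreg v]
  rw [coordMeasure, setLIntegral_prod_univ_right _ _ _
    ((measurable_measure_setOf_imp_lt _).pow_const Δ), hactive]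

theorem stmt6_general {V : Type} [Fintype V] [DecidableEq V] (G : SimpleGraph V) [DecidableRel G.Adj]
    (Δ : ℕ) (hreg : G.IsRegularOfDegree Δ)
    (γ : ℝ) (hγ0 : 0 < γ) (hγΔ : γ ≤ (Δ : ℝ)) (v : V) :
    ((procMeasure V (ENNReal.ofReal (γ / (Δ : ℝ)))) {ω | v ∈ indepSet G ω}).toReal
      = (1 / (Δ : ℝ)) * ∫ x in (0:ℝ)..γ, (1 - x / (Δ : ℝ)) ^ Δ := by
  have hΔ : (0 : ℝ) < Δ := hγ0.trans_le hγΔ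
  have hp0 : 0 ≤ γ / Δ := by positivity
  have hp1 : γ / Δ ≤ 1 := (div_le_one hΔ).mpr hγΔ
  rw [procMeasure_mem_indepSet G hreg hp0 hp1 v, ENNReal.toReal_mul, ENNReal.toReal_ofReal hp0,
    toReal_lintegral_coordMeasure_setOf_imp_lt_pow hp0 hp1,
    ← smul_intervalIntegral_comp_mul_one_sub (fun x => (1 - x / Δ) ^ Δ) γ, smul_eq_mul,
    ← mul_assoc, one_div_mul_eq_div]
  simp only [mul_div_right_comm γ _ (Δ : ℝ)]

/-- Let G be a Δ-regular finite simple graph with Δ ≥ 1, let 0 < γ ≤ Δ, and run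
the random independent set procedure on G with parameter γ (activation probability γ/Δ).
Then for every vertex v of G, P[v ∈ I] = (1/Δ)·∫₀^γ (1 − x/Δ)^Δ dx. -/
theorem stmt6 {V : Type} [Fintype V] [DecidableEq V] (G : SimpleGraph V) [DecidableRel G.Adj]
    (Δ : ℕ) (hΔ : 1 ≤ Δ) (hreg : G.IsRegularOfDegree Δ)
    (γ : ℝ) (hγ0 : 0 < γ) (hγΔ : γ ≤ (Δ : ℝ)) (v : V) :
    ((procMeasure V (ENNReal.ofReal (γ / (Δ : ℝ)))) {ω | v ∈ indepSet G ω}).toReal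
      = (1 / (Δ : ℝ)) * ∫ x in (0:ℝ)..γ, (1 - x / (Δ : ℝ)) ^ Δ :=
  stmt6_general G Δ hreg γ hγ0 hγΔ v
end

section
/- For every natural number Δ ≥ 1 and every real γ with 0 ≤ γ ≤ Δ, the integral ∫₀^γ (1 − x/Δ)^Δ dx lies in the interval [1 − e^{−γ} − 2/Δ, 1 − e^{−γ}]. -/
/-!
Substituting `t = 1 - x/Δ` turns the integral into `Δ/(Δ+1) · (1 - (1 - γ/Δ)^(Δ+1))`. The upper
bound is the pointwise estimate `(1 - x/Δ)^Δ ≤ e^{-x}` integrated over `[0, γ]`; the lower bound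
follows from `(1 - γ/Δ)^(Δ+1) ≤ (1 - γ/Δ)^Δ ≤ e^{-γ}`, and the factor `Δ/(Δ+1)` costs at most
`1/(Δ+1) ≤ 2/Δ`.
-/

open Real

theorem integral_one_sub_div_pow {a : ℝ} (ha : a ≠ 0) (n : ℕ) (γ : ℝ) :
    ∫ x in (0:ℝ)..γ, (1 - x / a) ^ n = a / (n + 1) * (1 - (1 - γ / a) ^ (n + 1)) := by
  rw [intervalIntegral.integral_comp_sub_div (fun t => t ^ n) ha, integral_pow, smul_eq_mul]
  simp only [zero_div, sub_zero, one_pow]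
  ring

theorem integral_exp_neg (γ : ℝ) : ∫ x in (0:ℝ)..γ, exp (-x) = 1 - exp (-γ) := by
  rw [intervalIntegral.integral_comp_neg (fun x => exp x), integral_exp, neg_zero, exp_zero]

theorem integral_one_sub_div_pow_le {n : ℕ} {γ : ℝ} (hγ0 : 0 ≤ γ) (hγn : γ ≤ n) :
    ∫ x in (0:ℝ)..γ, (1 - x / n) ^ n ≤ 1 - exp (-γ) := by
  rw [← integral_exp_neg]
  refine intervalIntegral.integral_mono_on hγ0
    ((by fun_prop : Continuous _).intervalIntegrable _ _)
    ((by fun_prop : Continuous _).intervalIntegrable _ _) fun x hx => ?_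
  exact one_sub_div_pow_le_exp_neg (hx.2.trans hγn)

theorem one_sub_div_pow_succ_le_exp_neg {n : ℕ} {γ : ℝ} (hγ0 : 0 ≤ γ) (hγn : γ ≤ n) :
    (1 - γ / n) ^ (n + 1) ≤ exp (-γ) := by
  have h0 : 0 ≤ 1 - γ / n := sub_nonneg.2 (div_le_one_of_le₀ hγn n.cast_nonneg)
  have h1 : 1 - γ / n ≤ 1 := sub_le_self _ (div_nonneg hγ0 n.cast_nonneg)
  exact (pow_le_pow_of_le_one h0 h1 n.le_succ).trans (one_sub_div_pow_le_exp_neg hγn)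

theorem sub_two_div_le_div_add_one_mul {n : ℕ} (hn : 1 ≤ n) {y : ℝ} (hy : y ≤ 1) :
    y - 2 / n ≤ n / (n + 1) * y := by
  have hn' : (1 : ℝ) ≤ n := by exact_mod_cast hn
  have hsplit : n / (n + 1) * y = y - y / (n + 1) := by field_simp; ring
  have hy' : y / (n + 1) ≤ 1 / (n + 1) := by gcongr
  have h2 : 1 / ((n : ℝ) + 1) ≤ 2 / n := by
    rw [div_le_div_iff₀ (by positivity) (by positivity)]
    linarith
  linarith

/-- For every natural number Δ ≥ 1 and every real γ with 0 ≤ γ ≤ Δ, the integral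
∫₀^γ (1 − x/Δ)^Δ dx lies in the interval [1 − e^{−γ} − 2/Δ, 1 − e^{−γ}]. -/
theorem stmt7 (Δ : ℕ) (hΔ : 1 ≤ Δ) (γ : ℝ) (hγ0 : 0 ≤ γ) (hγΔ : γ ≤ Δ) :
    (∫ x in (0:ℝ)..γ, (1 - x / (Δ : ℝ)) ^ Δ) ∈
      Set.Icc (1 - Real.exp (-γ) - 2 / (Δ : ℝ)) (1 - Real.exp (-γ)) := by
  refine ⟨?_, integral_one_sub_div_pow_le hγ0 hγΔ⟩
  have hΔ0 : (Δ : ℝ) ≠ 0 := Nat.cast_ne_zero.2 (by omega)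
  rw [integral_one_sub_div_pow hΔ0]
  calc 1 - exp (-γ) - 2 / Δ ≤ Δ / (Δ + 1) * (1 - exp (-γ)) :=
        sub_two_div_le_div_add_one_mul hΔ (by linarith [exp_pos (-γ)])
    _ ≤ Δ / (Δ + 1) * (1 - (1 - γ / Δ) ^ (Δ + 1)) := by
        gcongr
        exact one_sub_div_pow_succ_le_exp_neg hγ0 hγΔ
end

section
/- For every real γ > 0 and all reals ℓ₁, ℓ₂, ℓ₃ ∈ [0,1] with ℓ₁ + ℓ₂ + ℓ₃ < 3, one has ∫₀¹ ∫_z¹ ∫_y¹ exp(−γ·(x + (1−ℓ₁)y + (1−ℓ₂−ℓ₃)z)) dx dy dz ≤ (1/γ³) · 1/((2−ℓ₁)(3−ℓ₁−ℓ₂−ℓ₃)). -/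
open Real intervalIntegral

lemma int_exp_lin (c d s t : ℝ) (hc : c ≠ 0) :
    ∫ x in s..t, Real.exp (c * x + d)
      = (Real.exp (c * t + d) - Real.exp (c * s + d)) / c := by
  have h : ∀ x ∈ Set.uIcc s t,
      HasDerivAt (fun x => Real.exp (c * x + d) / c) (Real.exp (c * x + d)) x := by
    intro x _
    have h1 : HasDerivAt (fun x : ℝ => c * x + d) c x := by
      simpa using ((hasDerivAt_id x).const_mul c).add_const d
    have h2 := (h1.exp).div_const c
    simpa [mul_div_assoc, mul_div_cancel_right₀ _ hc] using h2
  rw [intervalIntegral.integral_eq_sub_of_hasDerivAt h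
    ((Real.continuous_exp.comp (by continuity)).intervalIntegrable s t)]
  ring

set_option maxHeartbeats 1000000 in
/-- For every real γ > 0 and all reals ℓ₁, ℓ₂, ℓ₃ ∈ [0,1] with ℓ₁+ℓ₂+ℓ₃ < 3,
∫₀¹ ∫_z¹ ∫_y¹ exp(−γ·(x + (1−ℓ₁)y + (1−ℓ₂−ℓ₃)z)) dx dy dz
  ≤ (1/γ³) · 1/((2−ℓ₁)(3−ℓ₁−ℓ₂−ℓ₃)). -/
theorem stmt10 (γ : ℝ) (hγ : 0 < γ) (ℓ₁ ℓ₂ ℓ₃ : ℝ)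
    (h₁ : ℓ₁ ∈ Set.Icc (0:ℝ) 1) (h₂ : ℓ₂ ∈ Set.Icc (0:ℝ) 1) (h₃ : ℓ₃ ∈ Set.Icc (0:ℝ) 1)
    (hsum : ℓ₁ + ℓ₂ + ℓ₃ < 3) :
    (∫ z in (0:ℝ)..1, ∫ y in z..1, ∫ x in y..1,
        Real.exp (-γ * (x + (1 - ℓ₁) * y + (1 - ℓ₂ - ℓ₃) * z)))
      ≤ (1 / γ ^ 3) * (1 / ((2 - ℓ₁) * (3 - ℓ₁ - ℓ₂ - ℓ₃))) := by
  have hγ' : γ ≠ 0 := ne_of_gt hγ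
  set A : ℝ := 1 - ℓ₁ with hA
  set B : ℝ := 1 - ℓ₂ - ℓ₃ with hB
  have h1A : 0 < 1 + A := by simp only [hA]; linarith [h₁.2]
  have h1AB : 0 < 1 + A + B := by simp only [hA, hB]; linarith
  -- exact value of the innermost integral
  have inner_eq : ∀ z y : ℝ, (∫ x in y..1, Real.exp (-γ * (x + A * y + B * z)))
      = (Real.exp (-γ * ((1 + A) * y + B * z))
          - Real.exp (-γ * (1 + A * y + B * z))) / γ := by
    intro z y
    have key := int_exp_lin (-γ) (-γ * (A * y + B * z)) y 1 (neg_ne_zero.mpr hγ')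
    rw [show (∫ x in y..1, Real.exp (-γ * (x + A * y + B * z)))
        = ∫ x in y..1, Real.exp (-γ * x + -γ * (A * y + B * z)) by
      congr 1; funext x; ring_nf]
    rw [key,
        show -γ * 1 + -γ * (A * y + B * z) = -γ * (1 + A * y + B * z) by ring,
        show -γ * y + -γ * (A * y + B * z) = -γ * ((1 + A) * y + B * z) by ring]
    rw [div_neg, ← neg_div, neg_sub]
  set G : ℝ → ℝ → ℝ := fun z y =>
    (Real.exp (-γ * ((1 + A) * y + B * z)) - Real.exp (-γ * (1 + A * y + B * z))) / γ
    with hG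
  have hGcont : Continuous (Function.uncurry G) := by
    apply Continuous.div_const
    exact (Real.continuous_exp.comp (by continuity)).sub
      (Real.continuous_exp.comp (by continuity))
  -- bound for the middle integral
  have mid_le : ∀ z ∈ Set.Icc (0:ℝ) 1,
      (∫ y in z..1, G z y) ≤ Real.exp (-γ * ((1 + A + B) * z)) / (γ ^ 2 * (1 + A)) := by
    intro z hz
    have step1 : (∫ y in z..1, G z y)
        ≤ ∫ y in z..1, Real.exp (-γ * (1 + A) * y + -γ * B * z) / γ := by
      apply intervalIntegral.integral_mono_on hz.2
      · exact ((hGcont.comp (continuous_const.prodMk continuous_id)).intervalIntegrable z 1)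
      · exact (((Real.continuous_exp.comp (by continuity)).div_const γ).intervalIntegrable z 1)
      · intro y _
        simp only [hG]
        have hnn := Real.exp_nonneg (-γ * (1 + A * y + B * z))
        have heq : -γ * (1 + A) * y + -γ * B * z = -γ * ((1 + A) * y + B * z) := by ring
        rw [heq]
        gcongr
        linarith
    have step2 : (∫ y in z..1, Real.exp (-γ * (1 + A) * y + -γ * B * z) / γ)
        = ((Real.exp (-γ * (1 + A) * 1 + -γ * B * z)
            - Real.exp (-γ * (1 + A) * z + -γ * B * z)) / (-γ * (1 + A))) / γ := by
      rw [intervalIntegral.integral_div, int_exp_lin]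
      exact mul_ne_zero (neg_ne_zero.mpr hγ') (ne_of_gt h1A)
    rw [step2] at step1
    refine step1.trans ?_
    have key : (Real.exp (-γ * (1 + A) * 1 + -γ * B * z)
            - Real.exp (-γ * (1 + A) * z + -γ * B * z)) / (-γ * (1 + A)) / γ
        = (Real.exp (-γ * (1 + A) * z + -γ * B * z)
            - Real.exp (-γ * (1 + A) * 1 + -γ * B * z)) / (γ ^ 2 * (1 + A)) := by
      field_simp; ring
    rw [key]
    have hzz : -γ * (1 + A) * z + -γ * B * z = -γ * ((1 + A + B) * z) := by ring
    rw [hzz]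
    exact (div_le_div_iff_of_pos_right (by positivity)).mpr
      (by linarith [Real.exp_nonneg (-γ * (1 + A) * 1 + -γ * B * z)])
  -- rewrite the middle integrals using the closed form
  have mid_eq : ∀ z : ℝ, (∫ y in z..1, ∫ x in y..1,
      Real.exp (-γ * (x + A * y + B * z))) = ∫ y in z..1, G z y := by
    intro z
    apply intervalIntegral.integral_congr
    intro y _
    exact inner_eq z y
  -- continuity in z of the middle integral
  have cont : Continuous fun z => ∫ y in z..1, G z y := by
    have h := intervalIntegral.continuous_parametric_intervalIntegral_of_continuous
      (μ := MeasureTheory.volume) (a₀ := (1:ℝ)) hGcont (s := fun z : ℝ => z) continuous_id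
    have heq : (fun z => ∫ y in z..1, G z y) = fun z => -(∫ y in (1:ℝ)..z, G z y) := by
      funext z; rw [intervalIntegral.integral_symm]
    rw [heq]
    exact h.neg
  calc (∫ z in (0:ℝ)..1, ∫ y in z..1, ∫ x in y..1,
          Real.exp (-γ * (x + A * y + B * z)))
      = ∫ z in (0:ℝ)..1, ∫ y in z..1, G z y := by
        apply intervalIntegral.integral_congr
        intro z _
        exact mid_eq z
    _ ≤ ∫ z in (0:ℝ)..1, Real.exp (-γ * ((1 + A + B) * z)) / (γ ^ 2 * (1 + A)) := by
        apply intervalIntegral.integral_mono_on (by norm_num)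
        · exact cont.intervalIntegrable 0 1
        · exact ((Real.continuous_exp.comp (by continuity)).div_const _).intervalIntegrable 0 1
        · exact mid_le
    _ ≤ (1 / γ ^ 3) * (1 / ((2 - ℓ₁) * (3 - ℓ₁ - ℓ₂ - ℓ₃))) := by
        have hcz : ∀ z : ℝ, -γ * ((1 + A + B) * z) = (-γ * (1 + A + B)) * z + 0 := by
          intro z; ring
        rw [show (∫ z in (0:ℝ)..1, Real.exp (-γ * ((1 + A + B) * z)) / (γ ^ 2 * (1 + A)))
            = ∫ z in (0:ℝ)..1, Real.exp ((-γ * (1 + A + B)) * z + 0) / (γ ^ 2 * (1 + A)) by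
          congr 1; funext z; rw [hcz z]]
        rw [intervalIntegral.integral_div, int_exp_lin _ _ _ _
          (mul_ne_zero (neg_ne_zero.mpr hγ') (ne_of_gt h1AB))]
        have h2ℓ : (2 - ℓ₁) = 1 + A := by simp [hA]; ring
        have h3ℓ : (3 - ℓ₁ - ℓ₂ - ℓ₃) = 1 + A + B := by simp [hA, hB]; ring
        rw [h2ℓ, h3ℓ]
        have e1 := Real.exp_nonneg (-γ * (1 + A + B) * 1 + 0)
        have e2 : Real.exp (-γ * (1 + A + B) * 1 + 0) ≤ 1 := by
          apply Real.exp_le_one_iff.mpr  -- maybe wrong name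
          nlinarith
        have key : (Real.exp (-γ * (1 + A + B) * 1 + 0) - Real.exp (-γ * (1 + A + B) * 0 + 0))
              / (-γ * (1 + A + B)) / (γ ^ 2 * (1 + A))
            = (1 - Real.exp (-γ * (1 + A + B) * 1 + 0))
              / (γ ^ 3 * (1 + A + B) * (1 + A)) := by
          rw [show -γ * (1 + A + B) * 0 + 0 = 0 by ring, Real.exp_zero]
          field_simp; ring
        rw [key]
        rw [div_le_iff₀ (by positivity)]  -- maybe
        have : (1 / γ ^ 3) * (1 / ((1 + A) * (1 + A + B))) * (γ ^ 3 * (1 + A + B) * (1 + A))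
            = 1 := by field_simp
        rw [this]
        linarith
end

section
/- Define f(a,b,c) = 1/((2−a)(3−a−b−c)). For all reals ℓ₁, ℓ₂, ℓ₃ ∈ [0,1), one has f(ℓ₁,ℓ₂,ℓ₃) + f(ℓ₃,ℓ₁,ℓ₂) + f(ℓ₂,ℓ₃,ℓ₁) ≤ (1/3)·( 1/((2−ℓ₁)(1−ℓ₁)) + 1/((2−ℓ₂)(1−ℓ₂)) + 1/((2−ℓ₃)(1−ℓ₃)) ). -/
/-!
Put `xᵢ = 1 - ℓᵢ > 0`. The cyclic sum equals `(∑ 1/(1+xᵢ)) / (∑ xᵢ)` and the right-hand side is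
`(1/3) ∑ 1/((1+xᵢ) xᵢ)`. Two applications of Chebyshev's sum inequality close the gap: `xᵢ` and
`1/xᵢ` are oppositely ordered, which gives AM–HM `1/∑ xᵢ ≤ (∑ 1/xᵢ)/9`, while `1/(1+xᵢ)` and
`1/xᵢ` are similarly ordered, which gives `(∑ 1/(1+xᵢ))(∑ 1/xᵢ) ≤ 3 ∑ 1/((1+xᵢ) xᵢ)`.
-/

/-- The function f(a,b,c) = 1/((2−a)(3−a−b−c)). -/
noncomputable def fTriple (a b c : ℝ) : ℝ := 1 / ((2 - a) * (3 - a - b - c))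

open Finset

variable {ι : Type*} [Fintype ι]

theorem card_sq_le_sum_mul_sum_inv {x : ι → ℝ} (hx : ∀ i, 0 < x i) :
    (Fintype.card ι : ℝ) ^ 2 ≤ (∑ i, x i) * ∑ i, (x i)⁻¹ := by
  have hanti : Antivary x (fun i ↦ (x i)⁻¹) := fun i j hij ↦
    ((inv_lt_inv₀ (hx i) (hx j)).mp hij).le
  calc (Fintype.card ι : ℝ) ^ 2 = Fintype.card ι * ∑ i, x i * (x i)⁻¹ := by
        simp [fun i ↦ mul_inv_cancel₀ (hx i).ne', sq]
    _ ≤ (∑ i, x i) * ∑ i, (x i)⁻¹ := hanti.card_mul_sum_le_sum_mul_sum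

theorem sum_div_sum_le_sum_div_div_card [Nonempty ι] {f x : ι → ℝ} (hf : ∀ i, 0 ≤ f i)
    (hx : ∀ i, 0 < x i) (hfx : Antivary f x) :
    (∑ i, f i) / ∑ i, x i ≤ (∑ i, f i / x i) / Fintype.card ι := by
  have hn : (0 : ℝ) < Fintype.card ι := by exact_mod_cast Fintype.card_pos
  have hsum : 0 < ∑ i, x i := Finset.sum_pos (fun i _ ↦ hx i) univ_nonempty
  have hmono : Monovary f (fun i ↦ (x i)⁻¹) := fun i j hij ↦
    hfx ((inv_lt_inv₀ (hx i) (hx j)).mp hij)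
  have amhm : (∑ i, x i)⁻¹ ≤ (∑ i, (x i)⁻¹) / (Fintype.card ι : ℝ) ^ 2 := by
    rw [inv_eq_one_div, div_le_div_iff₀ hsum (by positivity), one_mul, mul_comm]
    exact card_sq_le_sum_mul_sum_inv hx
  calc (∑ i, f i) / ∑ i, x i = (∑ i, f i) * (∑ i, x i)⁻¹ := div_eq_mul_inv _ _
    _ ≤ (∑ i, f i) * ((∑ i, (x i)⁻¹) / (Fintype.card ι : ℝ) ^ 2) := by
        gcongr
        exact Finset.sum_nonneg fun i _ ↦ hf i
    _ ≤ (Fintype.card ι * ∑ i, f i * (x i)⁻¹) / (Fintype.card ι : ℝ) ^ 2 := by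
        rw [mul_div_assoc']
        exact div_le_div_of_nonneg_right hmono.sum_mul_sum_le_card_mul_sum (by positivity)
    _ = (∑ i, f i / x i) / Fintype.card ι := by
        simp only [div_eq_mul_inv]
        field_simp

theorem fTriple_add_fTriple_add_fTriple (a b c : ℝ) :
    fTriple a b c + fTriple c a b + fTriple b c a
      = (1 / (2 - a) + 1 / (2 - b) + 1 / (2 - c)) / (3 - a - b - c) := by
  simp only [fTriple, mul_inv, div_eq_mul_inv]
  ring

/-- For all reals ℓ₁, ℓ₂, ℓ₃ ∈ [0,1),
f(ℓ₁,ℓ₂,ℓ₃) + f(ℓ₃,ℓ₁,ℓ₂) + f(ℓ₂,ℓ₃,ℓ₁)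
  ≤ (1/3)·( 1/((2−ℓ₁)(1−ℓ₁)) + 1/((2−ℓ₂)(1−ℓ₂)) + 1/((2−ℓ₃)(1−ℓ₃)) ). -/
theorem stmt11 (ℓ₁ ℓ₂ ℓ₃ : ℝ) (h₁ : ℓ₁ ∈ Set.Ico (0:ℝ) 1) (h₂ : ℓ₂ ∈ Set.Ico (0:ℝ) 1)
    (h₃ : ℓ₃ ∈ Set.Ico (0:ℝ) 1) :
    fTriple ℓ₁ ℓ₂ ℓ₃ + fTriple ℓ₃ ℓ₁ ℓ₂ + fTriple ℓ₂ ℓ₃ ℓ₁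
      ≤ (1 / 3) * (1 / ((2 - ℓ₁) * (1 - ℓ₁)) + 1 / ((2 - ℓ₂) * (1 - ℓ₂))
          + 1 / ((2 - ℓ₃) * (1 - ℓ₃))) := by
  set x : Fin 3 → ℝ := ![1 - ℓ₁, 1 - ℓ₂, 1 - ℓ₃]
  have hx : ∀ i, 0 < x i := by
    simpa [x, Fin.forall_fin_succ] using ⟨h₁.2, h₂.2, h₃.2⟩
  have hfx : Antivary (fun i ↦ 1 / (1 + x i)) x := fun i j hij ↦
    one_div_le_one_div_of_le (by linarith [hx i]) (by linarith)
  have key := sum_div_sum_le_sum_div_div_card (fun i ↦ by positivity [hx i]) hx hfx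
  simp only [Fin.sum_univ_three, Matrix.cons_val_zero, Matrix.cons_val_one, Matrix.cons_val,
    Fintype.card_fin, Nat.cast_ofNat, x] at key
  rw [fTriple_add_fTriple_add_fTriple]
  convert key using 1 <;> simp only [one_div, mul_inv] <;> ring
end

section
/- Let (Ω_i, σ_i, P_i), for i = 1, …, n, be probability spaces and let (Ω, σ, P) be their product. Let S be a finite set and let X : Ω → S be a measurable random variable. Then for every ε > 0 and every i ∈ {1,…,n} there exist a finite subset F_i ⊆ Ω_i and a measurable function φ_i : Ω_i → Ω_i with range contained in F_i, such that the map φ : Ω → Ω defined by φ(ω₁,…,ω_n) = (φ₁(ω₁),…,φ_n(ω_n)) satisfies P[{ω ∈ Ω : X(ω) ≠ X(φ(ω))}] < ε. -/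
/-!
Approximate each fibre of `X`, up to small measure, by a set whose membership depends on the
first coordinate only through finitely many measurable sets `U`. Sending every atom of `U` to a
point where the section measure of the approximation error `E` is at most its average over the
atom leaves membership unchanged off `E ∪ (ψ × id)⁻¹ E`, and the second set is no larger than
`E`. This treats one factor of a product `A × B`; the other factors follow by induction, applied
to the sections of the family at the finitely many values of `ψ`.
-/

open MeasureTheory Set
open scoped ENNReal symmDiff

namespace MeasureTheory

variable {A B : Type*} [MeasurableSpace A] [MeasurableSpace B] {μ : Measure A}

theorem exists_mem_mul_measure_le_setLIntegral {s : Set A}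
    (hne : s.Nonempty) (hμs : μ s ≠ ∞) {h : A → ℝ≥0∞} (hh : AEMeasurable h (μ.restrict s)) :
    ∃ y ∈ s, h y * μ s ≤ ∫⁻ x in s, h x ∂μ := by
  rcases eq_or_ne (μ s) 0 with hμ0 | hμ0
  · obtain ⟨y, hy⟩ := hne
    exact ⟨y, hy, by simp [hμ0]⟩
  by_cases hint : ∫⁻ x in s, h x ∂μ = ∞
  · obtain ⟨y, hy⟩ := hne
    exact ⟨y, hy, by simp [hint]⟩
  obtain ⟨y, hy, hle⟩ := exists_le_setLAverage hμ0 hμs hh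
  exact ⟨y, hy, by
    rw [← measure_mul_setLAverage h hμs, mul_comm]
    gcongr⟩

theorem SimpleFunc.lintegral_eq_sum_setLIntegral_fiber {β : Type*} (α : SimpleFunc A β)
    (f : A → ℝ≥0∞) :
    ∫⁻ x, f x ∂μ = ∑ b ∈ α.range, ∫⁻ x in α ⁻¹' {b}, f x ∂μ := by
  rw [← lintegral_biUnion_finset (pairwiseDisjoint_fiber _ _) fun b _ => α.measurableSet_fiber b,
    Finset.set_biUnion_preimage_singleton, SimpleFunc.coe_range, preimage_range,
    Measure.restrict_univ]

theorem SimpleFunc.exists_lintegral_comp_le {β : Type*} (α : SimpleFunc A β) [IsFiniteMeasure μ]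
    {h : A → ℝ≥0∞} (hh : Measurable h) :
    ∃ ψ : SimpleFunc A A, (∀ x, α (ψ x) = α x) ∧ ∫⁻ x, h (ψ x) ∂μ ≤ ∫⁻ x, h x ∂μ := by
  rcases isEmpty_or_nonempty A with hA | hA
  · exact ⟨⟨id, isEmptyElim, Set.toFinite _⟩, isEmptyElim, le_rfl⟩
  have hrep : ∀ b, ∃ y, (∀ x, α x = b → α y = b) ∧
      h y * μ (α ⁻¹' {b}) ≤ ∫⁻ x in α ⁻¹' {b}, h x ∂μ := by
    intro b
    by_cases hne : (α ⁻¹' {b}).Nonempty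
    · obtain ⟨y, hy, hle⟩ :=
        exists_mem_mul_measure_le_setLIntegral hne (measure_ne_top μ _) hh.aemeasurable
      exact ⟨y, fun _ _ => hy, hle⟩
    · rw [not_nonempty_iff_eq_empty] at hne
      exact ⟨Classical.arbitrary A, fun x hx => (hne.subset hx).elim, by simp [hne]⟩
  choose q hqα hqh using hrep
  refine ⟨α.map q, fun x => hqα _ x rfl, ?_⟩
  rw [α.lintegral_eq_sum_setLIntegral_fiber, α.lintegral_eq_sum_setLIntegral_fiber]
  refine Finset.sum_le_sum fun b _ => ?_
  calc ∫⁻ x in α ⁻¹' {b}, h (α.map q x) ∂μ = ∫⁻ x in α ⁻¹' {b}, h (q b) ∂μ :=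
        setLIntegral_congr_fun (α.measurableSet_fiber b) fun x hx => by
          rw [SimpleFunc.map_apply, show α x = b from hx]
    _ = h (q b) * μ (α ⁻¹' {b}) := setLIntegral_const _ _
    _ ≤ _ := hqh b

def fstFinitelyDeterminedSets (A B : Type*) [MeasurableSpace A] [MeasurableSpace B] :
    Set (Set (A × B)) :=
  {t | MeasurableSet t ∧ ∃ U : Set (Set A), U.Finite ∧ (∀ u ∈ U, MeasurableSet u) ∧
    ∀ x y, (∀ u ∈ U, x ∈ u ↔ y ∈ u) → ∀ b, (x, b) ∈ t ↔ (y, b) ∈ t}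

theorem isSetAlgebra_fstFinitelyDeterminedSets :
    IsSetAlgebra (fstFinitelyDeterminedSets A B) where
  empty_mem := ⟨.empty, ∅, finite_empty, by simp, by simp⟩
  compl_mem := by
    rintro t ⟨ht, U, hU, hUm, hdet⟩
    exact ⟨ht.compl, U, hU, hUm, fun x y hxy b => not_congr (hdet x y hxy b)⟩
  union_mem := by
    rintro s t ⟨hs, U, hU, hUm, hdetU⟩ ⟨ht, V, hV, hVm, hdetV⟩
    refine ⟨hs.union ht, U ∪ V, hU.union hV, by simpa [or_imp, forall_and] using ⟨hUm, hVm⟩,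
      fun x y hxy b => ?_⟩
    simp only [mem_union] at hxy
    exact or_congr (hdetU x y (fun u hu => hxy u (.inl hu)) b)
      (hdetV x y (fun v hv => hxy v (.inr hv)) b)

theorem generateFrom_fstFinitelyDeterminedSets :
    MeasurableSpace.generateFrom (fstFinitelyDeterminedSets A B) = Prod.instMeasurableSpace := by
  refine le_antisymm (MeasurableSpace.generateFrom_le fun t ht => ht.1) ?_
  rw [← generateFrom_prod]
  refine MeasurableSpace.generateFrom_mono ?_
  rintro _ ⟨u, hu, v, hv, rfl⟩
  refine ⟨hu.prod hv, {u}, finite_singleton u, by simpa using hu, fun x y hxy b => ?_⟩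
  simp [hxy u rfl]

theorem exists_fstFinitelyDetermined_approx (ρ : Measure (A × B)) [IsFiniteMeasure ρ]
    {𝒞 : Set (Set (A × B))} (h𝒞 : 𝒞.Finite) (h𝒞m : ∀ C ∈ 𝒞, MeasurableSet C)
    {δ : ℝ≥0∞} (hδ : δ ≠ 0) :
    ∃ U : Set (Set A), U.Finite ∧ (∀ u ∈ U, MeasurableSet u) ∧
      ∃ E, MeasurableSet E ∧ ρ E < δ ∧ ∀ C ∈ 𝒞, ∀ x y, (∀ u ∈ U, x ∈ u ↔ y ∈ u) →
        ∀ b, (x, b) ∉ E → (y, b) ∉ E → ((x, b) ∈ C ↔ (y, b) ∈ C) := by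
  have := h𝒞.to_subtype
  obtain ⟨η, hη, hηδ⟩ := ENNReal.exists_pos_sum_of_countable hδ 𝒞
  have hdense : ρ.MeasureDense (fstFinitelyDeterminedSets A B) :=
    .of_generateFrom_isSetAlgebra_finite (μ := ρ) isSetAlgebra_fstFinitelyDeterminedSets
      generateFrom_fstFinitelyDeterminedSets.symm
  have happrox (C : 𝒞) : ∃ t ∈ fstFinitelyDeterminedSets A B, ρ (C ∆ t) < η C := by
    simpa using hdense.approx C (h𝒞m C C.2) (measure_ne_top ρ _) (η C) (hη C)
  choose t ht hCt using happrox
  choose htm U hU hUm hdet using ht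
  refine ⟨⋃ C, U C, finite_iUnion hU, by simpa using fun u C hu => hUm C u hu,
    ⋃ C : 𝒞, (C : Set (A × B)) ∆ t C, .iUnion fun C => (h𝒞m C C.2).symmDiff (htm C), ?_, ?_⟩
  · exact (measure_iUnion_le _).trans_lt <|
      (ENNReal.tsum_le_tsum fun C => (hCt C).le).trans_lt hηδ
  · intro C hC x y hxy b hx hy
    have hagree {z} (hz : z ∉ ⋃ C : 𝒞, (C : Set (A × B)) ∆ t C) : z ∈ C ↔ z ∈ t ⟨C, hC⟩ := by
      simp only [mem_iUnion, not_exists] at hz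
      simpa [mem_symmDiff, iff_iff_implies_and_implies, imp_iff_not_or] using hz ⟨C, hC⟩
    rw [hagree hx, hagree hy]
    exact hdet ⟨C, hC⟩ x y (fun u hu => hxy u (mem_iUnion.2 ⟨⟨C, hC⟩, hu⟩)) b

def separatedFromImage {α : Type*} (𝒞 : Set (Set α)) (f : α → α) : Set α :=
  {x | ∃ C ∈ 𝒞, ¬(x ∈ C ↔ f x ∈ C)}

theorem exists_simpleFunc_prod_measure_separatedFromImage_lt (μ : Measure A) (ν : Measure B)
    [IsFiniteMeasure μ] [IsFiniteMeasure ν] {𝒞 : Set (Set (A × B))} (h𝒞 : 𝒞.Finite)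
    (h𝒞m : ∀ C ∈ 𝒞, MeasurableSet C) {δ : ℝ≥0∞} (hδ : δ ≠ 0) :
    ∃ ψ : SimpleFunc A A, (μ.prod ν) (separatedFromImage 𝒞 (Prod.map ψ id)) < δ := by
  obtain ⟨U, hU, hUm, E, hEm, hE, hdet⟩ :=
    exists_fstFinitelyDetermined_approx (μ.prod ν) h𝒞 h𝒞m (ENNReal.half_pos hδ).ne'
  have := hU.to_subtype
  have hpattern : Measurable fun x (u : U) => x ∈ (u : Set A) :=
    measurable_pi_lambda _ fun u => measurableSet_setOfPred.1 (hUm u u.2)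
  let pattern : SimpleFunc A (U → Prop) :=
    ⟨_, fun _ => hpattern (measurableSet_singleton _), Set.toFinite _⟩
  obtain ⟨ψ, hψ, hψE⟩ := pattern.exists_lintegral_comp_le (μ := μ)
    (measurable_measure_prodMk_left (ν := ν) hEm)
  refine ⟨ψ, ?_⟩
  have hψE' : (μ.prod ν) (Prod.map ψ id ⁻¹' E) ≤ (μ.prod ν) E := by
    rwa [Measure.prod_apply hEm, Measure.prod_apply ((ψ.measurable.prodMap measurable_id) hEm)]
  have hsep : separatedFromImage 𝒞 (Prod.map ψ id) ⊆ E ∪ Prod.map ψ id ⁻¹' E := by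
    rintro ⟨x, b⟩ ⟨C, hC, hxC⟩
    by_contra hxE
    simp only [mem_union, mem_preimage, not_or] at hxE
    refine hxC (hdet C hC x (ψ x) (fun u hu => ?_) b hxE.1 hxE.2)
    exact Iff.of_eq (congrFun (hψ x) ⟨u, hu⟩).symm
  calc (μ.prod ν) (separatedFromImage 𝒞 (Prod.map ψ id))
      ≤ (μ.prod ν) E + (μ.prod ν) (Prod.map ψ id ⁻¹' E) :=
        (measure_mono hsep).trans (measure_union_le _ _)
    _ < δ / 2 + δ / 2 := ENNReal.add_lt_add hE (hψE'.trans_lt hE)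
    _ = δ := ENNReal.add_halves δ

theorem exists_simpleFunc_pi_measure_separatedFromImage_lt {n : ℕ} {Ω : Fin n → Type*}
    [∀ i, MeasurableSpace (Ω i)] (P : ∀ i, Measure (Ω i)) [∀ i, IsProbabilityMeasure (P i)]
    {𝒞 : Set (Set (∀ i, Ω i))} (h𝒞 : 𝒞.Finite) (h𝒞m : ∀ C ∈ 𝒞, MeasurableSet C)
    {δ : ℝ≥0∞} (hδ : δ ≠ 0) :
    ∃ φ : ∀ i, SimpleFunc (Ω i) (Ω i),
      Measure.pi P (separatedFromImage 𝒞 fun ω i => φ i (ω i)) < δ := by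
  induction n generalizing δ with
  | zero =>
    refine ⟨fun i => i.elim0, ?_⟩
    have hid (ω : ∀ i, Ω i) : (fun i => (i.elim0 : SimpleFunc (Ω i) (Ω i)) (ω i)) = ω :=
      Subsingleton.elim _ _
    simpa [separatedFromImage, hid] using pos_iff_ne_zero.2 hδ
  | succ n ih =>
    set e := MeasurableEquiv.piFinSuccAbove Ω 0
    set 𝒞' := (e.symm ⁻¹' ·) '' 𝒞
    have h𝒞'm : ∀ C' ∈ 𝒞', MeasurableSet C' := by
      rintro _ ⟨C, hC, rfl⟩
      exact e.symm.measurable (h𝒞m C hC)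
    obtain ⟨ψ, hψ⟩ := exists_simpleFunc_prod_measure_separatedFromImage_lt (P 0)
      (Measure.pi fun j => P (Fin.succAbove 0 j)) (h𝒞.image _) h𝒞'm (ENNReal.half_pos hδ).ne'
    set 𝒟 := image2 (fun g C' => Prod.mk g ⁻¹' C') (range ψ) 𝒞'
    have h𝒟m : ∀ D ∈ 𝒟, MeasurableSet D := by
      rintro _ ⟨g, -, C', hC', rfl⟩
      exact measurable_prodMk_left (h𝒞'm C' hC')
    obtain ⟨φ', hφ'⟩ := ih (fun j => P (Fin.succAbove 0 j))
      (ψ.finite_range.image2 _ (h𝒞.image _)) h𝒟m (ENNReal.half_pos hδ).ne'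
    set φ : ∀ i, SimpleFunc (Ω i) (Ω i) := Fin.insertNth 0 ψ φ'
    refine ⟨φ, ?_⟩
    have he (ω : ∀ i, Ω i) :
        e (fun i => φ i (ω i)) = (ψ (e ω).1, fun j => φ' j ((e ω).2 j)) := by
      ext j
      · change φ 0 (ω 0) = ψ (ω 0)
        rw [show φ 0 = ψ from Fin.insertNth_apply_same _ _ _]
      · change φ (Fin.succAbove 0 j) _ = φ' j _
        rw [show φ (Fin.succAbove 0 j) = φ' j from Fin.insertNth_apply_succAbove _ _ _ _]
        rfl
    have hsub : separatedFromImage 𝒞 (fun ω i => φ i (ω i)) ⊆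
        e ⁻¹' (separatedFromImage 𝒞' (Prod.map ψ id) ∪
          univ ×ˢ separatedFromImage 𝒟 fun b j => φ' j (b j)) := by
      rintro ω ⟨C, hC, hωC⟩
      by_contra hω
      simp only [separatedFromImage, mem_preimage, mem_union, mem_prod, mem_univ, true_and,
        mem_ofPred_eq, not_or, not_exists, not_and, not_not] at hω
      have hC' : e.symm ⁻¹' C ∈ 𝒞' := mem_image_of_mem _ hC
      have hD : Prod.mk (ψ (e ω).1) ⁻¹' (e.symm ⁻¹' C) ∈ 𝒟 :=
        mem_image2_of_mem (mem_range_self _) hC'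
      have key : e ω ∈ e.symm ⁻¹' C ↔ e (fun i => φ i (ω i)) ∈ e.symm ⁻¹' C := by
        rw [he ω]
        exact (hω.1 _ hC').trans (hω.2 _ hD)
      simp only [mem_preimage, MeasurableEquiv.symm_apply_apply] at key
      exact hωC key
    calc _ ≤ _ := measure_mono hsub
      _ = _ := (measurePreserving_piFinSuccAbove P 0).measure_preimage_equiv _
      _ ≤ _ := measure_union_le _ _
      _ < δ / 2 + δ / 2 := by
        rw [Measure.prod_prod, measure_univ, one_mul]
        exact ENNReal.add_lt_add hψ hφ'
      _ = δ := ENNReal.add_halves δ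

end MeasureTheory

/-- Let (Ω_i, σ_i, P_i), for i = 1, …, n, be probability spaces and let
(Ω, σ, P) be their product. Let S be a finite set and let X : Ω → S be a measurable random
variable (S carrying the discrete σ-algebra, i.e. every fibre of X is measurable). Then for
every ε > 0 there exist, for each i, a finite subset F_i ⊆ Ω_i and a measurable function
φ_i : Ω_i → Ω_i with range contained in F_i (measurable w.r.t. the discrete σ-algebra on F_i,
i.e. every fibre of φ_i is measurable), such that the map
φ(ω₁,…,ω_n) = (φ₁(ω₁),…,φ_n(ω_n)) satisfies P[{ω : X(ω) ≠ X(φ(ω))}] < ε. -/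
theorem stmt18 {n : ℕ} {Ω : Fin n → Type*} [∀ i, MeasurableSpace (Ω i)]
    (P : ∀ i, Measure (Ω i)) [∀ i, IsProbabilityMeasure (P i)]
    {S : Type*} [Finite S] (X : (∀ i, Ω i) → S)
    (hX : ∀ s : S, MeasurableSet (X ⁻¹' {s}))
    (ε : ℝ) (hε : 0 < ε) :
    ∃ (F : ∀ i, Finset (Ω i)) (φ : ∀ i, Ω i → Ω i),
      (∀ i, ∀ x : Ω i, φ i x ∈ F i) ∧
      (∀ i, ∀ f : Ω i, MeasurableSet ((φ i) ⁻¹' {f})) ∧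
      Measure.pi P {ω | X ω ≠ X (fun i => φ i (ω i))} < ENNReal.ofReal ε := by
  obtain ⟨φ, hφ⟩ := exists_simpleFunc_pi_measure_separatedFromImage_lt P
    (finite_range fun s => X ⁻¹' {s}) (by rintro _ ⟨s, rfl⟩; exact hX s)
    (ENNReal.ofReal_pos.2 hε).ne'
  refine ⟨fun i => (φ i).range, fun i => φ i, fun i => (φ i).mem_range_self,
    fun i => (φ i).measurableSet_fiber, (measure_mono ?_).trans_lt hφ⟩
  intro ω hω
  exact ⟨X ⁻¹' {X ω}, mem_range_self _, fun h => hω (h.1 rfl).symm⟩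
end
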